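/- arXiv:2603.21759 — 7 statements merged into one kernel-verified Lean document; each statement's English description precedes it below -/
import Mathlib

section
/- Let p be a partition of [k], let κ be a crossing of p, and let x ∈ [k] lie in the same block of p as some element of κ. Then there exists a crossing κ' of p with x ∈ κ'. -/
/-- The block relation of a finite partition of `Fin n` (partition of `[n]`):
`x ∼_p y` iff `x` and `y` lie in the same block of `p`. -/
def PartRel {n : ℕ} (p : Finpartition (Finset.univ : Finset (Fin n))) (x y : Fin n) : Prop :=
  ∃ B ∈ p.parts, x ∈ B ∧ y ∈ B

/-- `κ` is a crossing of the relation `r`: `κ = {a,b,c,d}` with `a < b < c < d`,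
`r a c`, `r b d`, and `¬ r a b`. -/
def IsCross {n : ℕ} (r : Fin n → Fin n → Prop) (κ : Finset (Fin n)) : Prop :=
  ∃ a b c d : Fin n, a < b ∧ b < c ∧ c < d ∧ κ = {a, b, c, d} ∧ r a c ∧ r b d ∧ ¬ r a b

/-- `cr p`: the set of crossings of the partition `p`. -/
def cr {n : ℕ} (p : Finpartition (Finset.univ : Finset (Fin n))) : Set (Finset (Fin n)) :=
  {κ | IsCross (PartRel p) κ}

lemma PartRel.symm' {n : ℕ} {p : Finpartition (Finset.univ : Finset (Fin n))} {x y : Fin n}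
    (h : PartRel p x y) : PartRel p y x := by
  obtain ⟨B, hB, hx, hy⟩ := h; exact ⟨B, hB, hy, hx⟩

lemma PartRel.trans' {n : ℕ} {p : Finpartition (Finset.univ : Finset (Fin n))} {x y z : Fin n}
    (h : PartRel p x y) (h' : PartRel p y z) : PartRel p x z := by
  obtain ⟨B, hB, hx, hy⟩ := h
  obtain ⟨B', hB', hy', hz⟩ := h'
  exact ⟨B, hB, hx, (p.eq_of_mem_parts hB hB' hy hy') ▸ hz⟩

/-- if `κ` is a crossing of `p` and `x` lies in the same block of `p`
as some element of `κ`, then there is a crossing of `p` containing `x`. -/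
theorem stmt0 {k : ℕ} (p : Finpartition (Finset.univ : Finset (Fin k)))
    (κ : Finset (Fin k)) (hκ : κ ∈ cr p)
    (x : Fin k) (hx : ∃ e ∈ κ, PartRel p x e) :
    ∃ κ' ∈ cr p, x ∈ κ' := by
  obtain ⟨a, b, c, d, hab, hbc, hcd, hset, hac, hbd, hnab⟩ := hκ
  obtain ⟨e, he, hxe⟩ := hx
  rw [hset] at he
  simp only [Finset.mem_insert, Finset.mem_singleton] at he
  -- reduce to x ∼ a or x ∼ b
  have key : PartRel p x a ∨ PartRel p x b := by
    rcases he with rfl | rfl | rfl | rfl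
    · exact Or.inl hxe
    · exact Or.inr hxe
    · exact Or.inl (hxe.trans' hac.symm')
    · exact Or.inr (hxe.trans' hbd.symm')
  rcases key with hxa | hxb
  · -- x ∼ a, x ∼ c, ¬ x ∼ b
    have hxc : PartRel p x c := hxa.trans' hac
    have hnxb : ¬ PartRel p x b := fun h => hnab (hxa.symm'.trans' h)
    rcases lt_trichotomy x b with hxb | rfl | hbx
    · exact ⟨{x, b, c, d}, ⟨x, b, c, d, hxb, hbc, hcd, rfl, hxc, hbd, hnxb⟩, by simp⟩
    · exact absurd hxa.symm' (fun h => hnab (h.symm'.symm'))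
    · have hxd : x ≠ d := fun h => hnxb (h ▸ hbd.symm')
      rcases lt_or_gt_of_ne hxd with hxd' | hdx
      · exact ⟨{a, b, x, d}, ⟨a, b, x, d, hab, hbx, hxd', rfl, hxa.symm', hbd, hnab⟩, by simp⟩
      · have hnbc : ¬ PartRel p b c := fun h => hnab (hac.trans' h.symm')
        exact ⟨{b, c, d, x}, ⟨b, c, d, x, hbc, hcd, hdx, rfl, hbd, hxc.symm', hnbc⟩, by simp⟩
  · -- x ∼ b, x ∼ d, ¬ x ∼ a
    have hxd : PartRel p x d := hxb.trans' hbd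
    have hnxa : ¬ PartRel p a x := fun h => hnab (h.trans' hxb)
    have hxa : x ≠ a := fun h => hnxa (by subst h; exact ⟨p.part x, p.part_mem.mpr (by simp), p.mem_part (by simp), p.mem_part (by simp)⟩)
    rcases lt_or_gt_of_ne hxa with hxa' | hax
    · exact ⟨{x, a, b, c}, ⟨x, a, b, c, hxa', hab, hbc, rfl, hxb, hac, fun h => hnxa h.symm'⟩, by simp⟩
    · have hxc : x ≠ c := fun h => hnab ((hac.trans' (h ▸ hxb : PartRel p c b)))
      rcases lt_or_gt_of_ne hxc with hxc' | hcx
      · exact ⟨{a, x, c, d}, ⟨a, x, c, d, hax, hxc', hcd, rfl, hac, hxd, hnxa⟩, by simp⟩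
      · exact ⟨{a, b, c, x}, ⟨a, b, c, x, hab, hbc, hcx, rfl, hac, hxb.symm', hnab⟩, by simp⟩
end

section
/- Let p be a partition of [k], let κ₁ < κ₂ < κ₃ < κ₄ be a crossing of p, and let a, b ∈ χ₀(p) be non-crossers with a ≠ b and a ∼_p b. Then either there exists j ∈ {1,2,3} with κ_j < a < κ_{j+1} and κ_j < b < κ_{j+1}, or both a and b lie outside the closed interval [κ₁, κ₄] (i.e. each of a and b is either < κ₁ or > κ₄). -/
/-- `crossers p` (`χ(p)`): the union of all crossings of `p`. -/
def crossers {n : ℕ} (p : Finpartition (Finset.univ : Finset (Fin n))) : Set (Fin n) :=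
  {x | ∃ κ ∈ cr p, x ∈ κ}

lemma in_crossers {n : ℕ} {p : Finpartition (Finset.univ : Finset (Fin n))}
    {x y z w t : Fin n} (hxy : x < y) (hyz : y < z) (hzw : z < w)
    (hxz : PartRel p x z) (hyw : PartRel p y w) (hnxy : ¬ PartRel p x y)
    (ht : t = x ∨ t = y ∨ t = z ∨ t = w) : t ∈ crossers p := by
  refine ⟨{x, y, z, w}, ⟨x, y, z, w, hxy, hyz, hzw, rfl, hxz, hyw, hnxy⟩, ?_⟩
  simp only [Finset.mem_insert, Finset.mem_singleton]
  exact ht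

lemma noncrosser_nrel {k : ℕ} {p : Finpartition (Finset.univ : Finset (Fin k))}
    {κ₁ κ₂ κ₃ κ₄ a : Fin k} (h12 : κ₁ < κ₂) (h23 : κ₂ < κ₃) (h34 : κ₃ < κ₄)
    (h13 : PartRel p κ₁ κ₃) (h24 : PartRel p κ₂ κ₄) (hn12 : ¬ PartRel p κ₁ κ₂)
    (ha : a ∉ crossers p) : ¬ PartRel p a κ₁ ∧ ¬ PartRel p a κ₂ := by
  have hn23 : ¬ PartRel p κ₂ κ₃ := fun h => hn12 (h13.trans' h.symm')
  have ha2 : a ≠ κ₂ := by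
    rintro rfl; exact ha (in_crossers h12 h23 h34 h13 h24 hn12 (Or.inr (Or.inl rfl)))
  have ha1 : a ≠ κ₁ := by
    rintro rfl; exact ha (in_crossers h12 h23 h34 h13 h24 hn12 (Or.inl rfl))
  have ha3 : a ≠ κ₃ := by
    rintro rfl; exact ha (in_crossers h12 h23 h34 h13 h24 hn12 (Or.inr (Or.inr (Or.inl rfl))))
  have ha4 : a ≠ κ₄ := by
    rintro rfl; exact ha (in_crossers h12 h23 h34 h13 h24 hn12 (Or.inr (Or.inr (Or.inr rfl))))
  constructor
  · intro h
    have h3 : PartRel p a κ₃ := h.trans' h13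
    have hn : ¬ PartRel p a κ₂ := fun h' => hn12 (h.symm'.trans' h')
    rcases lt_or_gt_of_ne ha2 with hlt | hgt
    · exact ha (in_crossers hlt h23 h34 h3 h24 hn (Or.inl rfl))
    · rcases lt_or_gt_of_ne ha4 with hlt4 | hgt4
      · exact ha (in_crossers h12 hgt hlt4 h.symm' h24 hn12 (Or.inr (Or.inr (Or.inl rfl))))
      · exact ha (in_crossers h23 h34 hgt4 h24 (h13.symm'.trans' h.symm') hn23
          (Or.inr (Or.inr (Or.inr rfl))))
  · intro h
    have h4 : PartRel p a κ₄ := h.trans' h24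
    have hn : ¬ PartRel p a κ₁ := fun h' => hn12 (h'.symm'.trans' h)
    rcases lt_or_gt_of_ne ha1 with hlt | hgt
    · exact ha (in_crossers hlt h12 h23 h h13 hn (Or.inl rfl))
    · rcases lt_or_gt_of_ne ha3 with hlt3 | hgt3
      · exact ha (in_crossers hgt hlt3 h34 h13 h4
          (fun h' => hn (h'.symm')) (Or.inr (Or.inl rfl)))
      · exact ha (in_crossers h12 h23 hgt3 h13 h.symm' hn12 (Or.inr (Or.inr (Or.inr rfl))))

/-- Main lemma assuming `a < b`. -/
lemma stmt2_aux {k : ℕ} {p : Finpartition (Finset.univ : Finset (Fin k))}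
    {κ₁ κ₂ κ₃ κ₄ : Fin k} (h12 : κ₁ < κ₂) (h23 : κ₂ < κ₃) (h34 : κ₃ < κ₄)
    (h13 : PartRel p κ₁ κ₃) (h24 : PartRel p κ₂ κ₄) (hn12 : ¬ PartRel p κ₁ κ₂)
    {a b : Fin k} (ha : a ∉ crossers p) (hb : b ∉ crossers p)
    (hab : a < b) (hrel : PartRel p a b) :
    (κ₁ < a ∧ a < κ₂ ∧ κ₁ < b ∧ b < κ₂) ∨
    (κ₂ < a ∧ a < κ₃ ∧ κ₂ < b ∧ b < κ₃) ∨
    (κ₃ < a ∧ a < κ₄ ∧ κ₃ < b ∧ b < κ₄) ∨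
    ((a < κ₁ ∨ κ₄ < a) ∧ (b < κ₁ ∨ κ₄ < b)) := by
  obtain ⟨hna1, hna2⟩ := noncrosser_nrel h12 h23 h34 h13 h24 hn12 ha
  obtain ⟨hnb1, hnb2⟩ := noncrosser_nrel h12 h23 h34 h13 h24 hn12 hb
  have ha1 : a ≠ κ₁ := by
    rintro rfl; exact ha (in_crossers h12 h23 h34 h13 h24 hn12 (Or.inl rfl))
  have ha2 : a ≠ κ₂ := by
    rintro rfl; exact ha (in_crossers h12 h23 h34 h13 h24 hn12 (Or.inr (Or.inl rfl)))
  have ha3 : a ≠ κ₃ := by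
    rintro rfl; exact ha (in_crossers h12 h23 h34 h13 h24 hn12 (Or.inr (Or.inr (Or.inl rfl))))
  have ha4 : a ≠ κ₄ := by
    rintro rfl; exact ha (in_crossers h12 h23 h34 h13 h24 hn12 (Or.inr (Or.inr (Or.inr rfl))))
  have hb1 : b ≠ κ₁ := by
    rintro rfl; exact hb (in_crossers h12 h23 h34 h13 h24 hn12 (Or.inl rfl))
  have hb2 : b ≠ κ₂ := by
    rintro rfl; exact hb (in_crossers h12 h23 h34 h13 h24 hn12 (Or.inr (Or.inl rfl)))
  have hb3 : b ≠ κ₃ := by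
    rintro rfl; exact hb (in_crossers h12 h23 h34 h13 h24 hn12 (Or.inr (Or.inr (Or.inl rfl))))
  have hb4 : b ≠ κ₄ := by
    rintro rfl; exact hb (in_crossers h12 h23 h34 h13 h24 hn12 (Or.inr (Or.inr (Or.inr rfl))))
  -- crossing constructions for mixed regions
  -- case tools
  have C1 : ∀ (h1 : a < κ₁) (h3 : κ₁ < b) (h5 : b < κ₃), False := fun h1 h3 h5 =>
    ha (in_crossers h1 h3 h5 hrel h13 (fun h => hna1 h) (Or.inl rfl))
  have C2 : ∀ (h1 : a < κ₂) (h3 : κ₂ < b) (h5 : b < κ₄), False := fun h1 h3 h5 =>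
    ha (in_crossers h1 h3 h5 hrel h24 (fun h => hna2 h) (Or.inl rfl))
  have C3 : ∀ (h1 : κ₁ < a) (h3 : a < κ₃) (h5 : κ₃ < b), False := fun h1 h3 h5 =>
    ha (in_crossers h1 h3 h5 h13 hrel (fun h => hna1 h.symm') (Or.inr (Or.inl rfl)))
  have C4 : ∀ (h1 : κ₂ < a) (h3 : a < κ₄) (h5 : κ₄ < b), False := fun h1 h3 h5 =>
    ha (in_crossers h1 h3 h5 h24 hrel (fun h => hna2 h.symm') (Or.inr (Or.inl rfl)))
  -- region of a, then region of b
  have asym : ∀ {x y : Fin k}, x < y → y < x → False := fun h h' => lt_asymm h h'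
  rcases lt_or_gt_of_ne ha1 with a1 | a1
  · -- a ∈ R0
    rcases lt_or_gt_of_ne hb1 with b1 | b1
    · exact Or.inr (Or.inr (Or.inr ⟨Or.inl a1, Or.inl b1⟩))
    · rcases lt_or_gt_of_ne hb2 with b2 | b2
      · exact (C1 a1 b1 (b2.trans h23)).elim
      · rcases lt_or_gt_of_ne hb3 with b3 | b3
        · exact (C1 a1 b1 b3).elim
        · rcases lt_or_gt_of_ne hb4 with b4 | b4
          · exact (C2 (a1.trans h12) (h23.trans b3) b4).elim
          · exact Or.inr (Or.inr (Or.inr ⟨Or.inl a1, Or.inr b4⟩))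
  · rcases lt_or_gt_of_ne ha2 with a2 | a2
    · -- a ∈ R1
      rcases lt_or_gt_of_ne hb1 with b1 | b1
      · exact (asym hab (b1.trans a1)).elim
      · rcases lt_or_gt_of_ne hb2 with b2 | b2
        · exact Or.inl ⟨a1, a2, b1, b2⟩
        · rcases lt_or_gt_of_ne hb3 with b3 | b3
          · exact (C2 a2 b2 (b3.trans h34)).elim
          · rcases lt_or_gt_of_ne hb4 with b4 | b4
            · exact (C2 a2 b2 b4).elim
            · exact (C3 a1 (a2.trans h23) (h34.trans b4)).elim
    · rcases lt_or_gt_of_ne ha3 with a3 | a3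
      · -- a ∈ R2
        rcases lt_or_gt_of_ne hb2 with b2 | b2
        · exact (asym hab (b2.trans a2)).elim
        · rcases lt_or_gt_of_ne hb3 with b3 | b3
          · exact Or.inr (Or.inl ⟨a2, a3, b2, b3⟩)
          · exact (C3 (h12.trans a2) a3 b3).elim
      · rcases lt_or_gt_of_ne ha4 with a4 | a4
        · -- a ∈ R3
          rcases lt_or_gt_of_ne hb3 with b3 | b3
          · exact (asym hab (b3.trans a3)).elim
          · rcases lt_or_gt_of_ne hb4 with b4 | b4
            · exact Or.inr (Or.inr (Or.inl ⟨a3, a4, b3, b4⟩))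
            · exact (C4 (h23.trans a3) a4 b4).elim
        · -- a ∈ R4
          rcases lt_or_gt_of_ne hb4 with b4 | b4
          · exact (asym hab (b4.trans a4)).elim
          · exact Or.inr (Or.inr (Or.inr ⟨Or.inr a4, Or.inr b4⟩))
/-- if `κ₁ < κ₂ < κ₃ < κ₄` is a crossing of `p` and `a ≠ b` are
non-crossers with `a ∼_p b`, then either `a` and `b` lie strictly between two
consecutive elements of the crossing, or both lie outside `[κ₁, κ₄]`. -/
theorem stmt2 {k : ℕ} (p : Finpartition (Finset.univ : Finset (Fin k)))
    (κ₁ κ₂ κ₃ κ₄ : Fin k) (h12 : κ₁ < κ₂) (h23 : κ₂ < κ₃) (h34 : κ₃ < κ₄)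
    (h13 : PartRel p κ₁ κ₃) (h24 : PartRel p κ₂ κ₄) (hn12 : ¬ PartRel p κ₁ κ₂)
    (a b : Fin k) (ha : a ∉ crossers p) (hb : b ∉ crossers p)
    (hab : a ≠ b) (hrel : PartRel p a b) :
    (κ₁ < a ∧ a < κ₂ ∧ κ₁ < b ∧ b < κ₂) ∨
    (κ₂ < a ∧ a < κ₃ ∧ κ₂ < b ∧ b < κ₃) ∨
    (κ₃ < a ∧ a < κ₄ ∧ κ₃ < b ∧ b < κ₄) ∨
    ((a < κ₁ ∨ κ₄ < a) ∧ (b < κ₁ ∨ κ₄ < b)) := by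
  rcases lt_or_gt_of_ne hab with h | h
  · exact stmt2_aux h12 h23 h34 h13 h24 hn12 ha hb h hrel
  · rcases stmt2_aux h12 h23 h34 h13 h24 hn12 hb ha h hrel.symm' with
      ⟨x1,x2,x3,x4⟩ | ⟨x1,x2,x3,x4⟩ | ⟨x1,x2,x3,x4⟩ | ⟨x1,x2⟩
    · exact Or.inl ⟨x3,x4,x1,x2⟩
    · exact Or.inr (Or.inl ⟨x3,x4,x1,x2⟩)
    · exact Or.inr (Or.inr (Or.inl ⟨x3,x4,x1,x2⟩))
    · exact Or.inr (Or.inr (Or.inr ⟨x2,x1⟩))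
end

section
/- Let p and q be partitions of [k] with cr(p) ⊆ cr(q). Then for all x, y ∈ χ(p), if x ∼_p y then x ∼_q y; that is, the restriction of p to its set of crossers refines the restriction of q to χ(p). -/
section Aux

variable {k : ℕ} {p q : Finpartition (Finset.univ : Finset (Fin k))}

lemma partRel_refl (x : Fin k) : PartRel p x x := by
  obtain ⟨B, hB, hx⟩ := p.exists_mem (Finset.mem_univ x)
  exact ⟨B, hB, hx, hx⟩

lemma partRel_symm {x y : Fin k} (h : PartRel p x y) : PartRel p y x := by
  obtain ⟨B, hB, hx, hy⟩ := h
  exact ⟨B, hB, hy, hx⟩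

lemma partRel_trans {x y z : Fin k} (h : PartRel p x y) (h' : PartRel p y z) :
    PartRel p x z := by
  obtain ⟨B, hB, hx, hy⟩ := h
  obtain ⟨B', hB', hy', hz⟩ := h'
  have : B = B' := p.eq_of_mem_parts hB hB' hy hy'
  exact ⟨B, hB, hx, this ▸ hz⟩

lemma quad_eq {a b c d a' b' c' d' : Fin k}
    (hab : a < b) (hbc : b < c) (hcd : c < d)
    (hab' : a' < b') (hbc' : b' < c') (hcd' : c' < d')
    (hset : ({a, b, c, d} : Finset (Fin k)) = {a', b', c', d'}) :
    a = a' ∧ b = b' ∧ c = c' ∧ d = d' := by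
  have mem : ∀ x : Fin k, x = a ∨ x = b ∨ x = c ∨ x = d ↔
      (x = a' ∨ x = b' ∨ x = c' ∨ x = d') := by
    intro x
    constructor <;> intro hx
    · have : x ∈ ({a, b, c, d} : Finset (Fin k)) := by simp [hx]
      rw [hset] at this; simpa using this
    · have : x ∈ ({a', b', c', d'} : Finset (Fin k)) := by simp [hx]
      rw [← hset] at this; simpa using this
  have ha : a = a' := by
    have h1 := (mem a).mp (Or.inl rfl)
    have h2 := (mem a').mpr (Or.inl rfl)
    rcases h1 with h | h | h | h <;> rcases h2 with g | g | g | g <;> subst h <;> omega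
  subst ha
  have hb : b = b' := by
    have h1 := (mem b).mp (Or.inr (Or.inl rfl))
    have h2 := (mem b').mpr (Or.inr (Or.inl rfl))
    rcases h1 with h | h | h | h <;> rcases h2 with g | g | g | g <;> omega
  subst hb
  have hc : c = c' := by
    have h1 := (mem c).mp (Or.inr (Or.inr (Or.inl rfl)))
    have h2 := (mem c').mpr (Or.inr (Or.inr (Or.inl rfl)))
    rcases h1 with h | h | h | h <;> rcases h2 with g | g | g | g <;> omega
  subst hc
  have hd : d = d' := by
    have h1 := (mem d).mp (Or.inr (Or.inr (Or.inr rfl)))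
    rcases h1 with h | h | h | h <;> omega
  exact ⟨rfl, rfl, rfl, hd⟩

/-- If a sorted quadruple is a crossing of `q`, then `a ∼_q c` and `b ∼_q d`. -/
lemma cr_extract {a b c d : Fin k}
    (hab : a < b) (hbc : b < c) (hcd : c < d)
    (hk : ({a, b, c, d} : Finset (Fin k)) ∈ cr q) :
    PartRel q a c ∧ PartRel q b d := by
  obtain ⟨a', b', c', d', hab', hbc', hcd', hset, hac, hbd, -⟩ := hk
  obtain ⟨ha, hb, hc, hd⟩ := quad_eq hab hbc hcd hab' hbc' hcd' hset
  subst ha; subst hb; subst hc; subst hd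
  exact ⟨hac, hbd⟩

/-- Key lemma 1: a "directly crossed" pair of `p` is related in `q`. -/
lemma key1 (hpq : cr p ⊆ cr q) {x y w w' : Fin k}
    (hxw : x < w) (hwy : w < y)
    (hxy : PartRel p x y) (hww' : PartRel p w w') (hwx : ¬ PartRel p w x)
    (hout : w' < x ∨ y < w') : PartRel q x y := by
  rcases hout with hout | hout
  · -- crossing {w', x, w, y}
    have hcr : ({w', x, w, y} : Finset (Fin k)) ∈ cr p := by
      refine ⟨w', x, w, y, hout, hxw, hwy, rfl, partRel_symm hww', hxy, ?_⟩
      intro hwx'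
      exact hwx (partRel_trans hww' hwx')
    exact (cr_extract hout hxw hwy (hpq hcr)).2
  · -- crossing {x, w, y, w'}
    have hcr : ({x, w, y, w'} : Finset (Fin k)) ∈ cr p := by
      refine ⟨x, w, y, w', hxw, hwy, hout, rfl, hxy, hww', ?_⟩
      intro hxw'
      exact hwx (partRel_symm hxw')
    exact (cr_extract hxw hwy hout (hpq hcr)).1

/-- Key lemma 2: if `x` is the smaller endpoint of a directly crossed pair of `p`,
then everything `p`-related to `x` is `q`-related to `x`. -/
lemma key2 (hpq : cr p ⊆ cr q) {x x' w w' : Fin k}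
    (hxw : x < w) (hwx' : w < x') (hout : w' < x ∨ x' < w')
    (hxx' : PartRel p x x') (hww' : PartRel p w w') (hwx : ¬ PartRel p w x) :
    ∀ y, PartRel p x y → PartRel q x y := by
  intro y hxy
  have hqxx' : PartRel q x x' := key1 hpq hxw hwx' hxx' hww' hwx (by omega)
  have hwy : ¬ PartRel p w y := fun hc => hwx (partRel_trans hc (partRel_symm hxy))
  have hyx' : PartRel p y x' := partRel_trans (partRel_symm hxy) hxx'
  have hw'y : ¬ PartRel p w' y := fun hc => hwy (partRel_trans hww' hc)
  have hyne : y ≠ w := fun hc => hwy (hc ▸ partRel_refl y)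
  have hyne' : y ≠ w' := fun hc => hw'y (hc ▸ partRel_refl y)
  rcases lt_trichotomy y x with hyx | hyx | hyx
  · -- y < x
    by_cases hw'int : y < w' ∧ w' < x
    · -- crossing pair (y, x) witnessed by (w', w)
      have := key1 hpq hw'int.1 hw'int.2 (partRel_symm hxy) (partRel_symm hww')
        (fun hc => hwy (partRel_trans hww' hc))
        (Or.inr (by omega))
      exact partRel_symm this
    · -- w' < y or x' < w'; crossing pair (y, x') witnessed by (w, w')
      have houty : w' < y ∨ x' < w' := by
        rcases hout with h1 | h1
        · left; rcases lt_or_eq_of_le (le_of_not_gt (fun hc => hw'int ⟨hc, h1⟩)) with h2 | h2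
          · exact h2
          · exact absurd h2.symm hyne'
        · right; exact h1
      have hq := key1 hpq (lt_trans hyx hxw) hwx' hyx' hww' hwy houty
      exact partRel_trans hqxx' (partRel_symm hq)
  · -- y = x
    subst hyx
    exact partRel_refl (p := q) y
  · -- x < y
    rcases lt_trichotomy y x' with hyx2 | hyx2 | hyx2
    · -- x < y < x'
      rcases lt_trichotomy y w with hyw | hyw | hyw
      · -- x < y < w < x' : crossing pair (y, x') witnessed by (w, w')
        have hq := key1 hpq hyw hwx' hyx' hww' hwy (by omega)
        exact partRel_trans hqxx' (partRel_symm hq)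
      · exact absurd hyw hyne
      · -- x < w < y : crossing pair (x, y) witnessed by (w, w')
        exact key1 hpq hxw hyw hxy hww' hwx (by omega)
    · -- y = x'
      subst hyx2
      exact hqxx'
    · -- x' < y
      by_cases hw'int : x' < w' ∧ w' < y
      · -- crossing pair (x', y) witnessed by (w', w)
        have hq := key1 hpq hw'int.1 hw'int.2 (partRel_trans (partRel_symm hxx') hxy)
          (partRel_symm hww')
          (fun hc => hwx (partRel_trans hww' (partRel_trans hc (partRel_symm hxx'))))
          (Or.inl (by omega))
        exact partRel_trans hqxx' hq
      · -- crossing pair (x, y) witnessed by (w, w')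
        have houty : w' < x ∨ y < w' := by
          rcases hout with h1 | h1
          · left; exact h1
          · right; rcases lt_or_eq_of_le (le_of_not_gt (fun hc => hw'int ⟨h1, hc⟩)) with h2 | h2
            · exact h2
            · exact absurd h2 hyne'
        exact key1 hpq hxw (by omega) hxy hww' hwx houty

/-- Main lemma: a crosser of `p` propagates its `p`-relations to `q`. -/
lemma main_lem (hpq : cr p ⊆ cr q) {x : Fin k} (hx : x ∈ crossers p) :
    ∀ y, PartRel p x y → PartRel q x y := by
  obtain ⟨κ, ⟨a, b, c, d, hab, hbc, hcd, hκ, hac, hbd, hnab⟩, hxκ⟩ := hx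
  rw [hκ] at hxκ
  have hnbc : ¬ PartRel p b c := fun hc => hnab (partRel_trans hac (partRel_symm hc))
  have hKa : ∀ y, PartRel p a y → PartRel q a y :=
    key2 hpq hab hbc (Or.inr hcd) hac hbd (fun hc => hnab (partRel_symm hc))
  have hKb : ∀ y, PartRel p b y → PartRel q b y :=
    key2 hpq hbc hcd (Or.inl hab) hbd (partRel_symm hac)
      (fun hc => hnbc (partRel_symm hc))
  simp only [Finset.mem_insert, Finset.mem_singleton] at hxκ
  rcases hxκ with rfl | rfl | rfl | rfl
  · exact hKa
  · exact hKb
  · intro y hcy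
    have h1 : PartRel q a y := hKa y (partRel_trans hac hcy)
    have h2 : PartRel q a x := hKa _ hac
    exact partRel_trans (partRel_symm h2) h1
  · intro y hdy
    have h1 : PartRel q b y := hKb y (partRel_trans hbd hdy)
    have h2 : PartRel q b x := hKb _ hbd
    exact partRel_trans (partRel_symm h2) h1

end Aux

/-- if `cr p ⊆ cr q`, then for all crossers `x, y` of `p`,
`x ∼_p y` implies `x ∼_q y`. -/
theorem stmt3 {k : ℕ} (p q : Finpartition (Finset.univ : Finset (Fin k)))
    (h : cr p ⊆ cr q) :
    ∀ x ∈ crossers p, ∀ y ∈ crossers p, PartRel p x y → PartRel q x y := by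
  intro x hx y _ hxy
  exact main_lem h hx y hxy
end

section
/- Let N and k be positive integers with k ≤ N. Then, inside ((Fin k → Fin N) → ℂ), the span of {ξ_p : p ∈ NC(k)} and the span of {ξ_p : p ∈ CR(k)} intersect trivially: span{ξ_p : p ∈ NC(k)} ∩ span{ξ_p : p ∈ CR(k)} = {0}. Consequently, every vector in span{ξ_p : p a partition of [k]} decomposes uniquely as the sum of a vector in the noncrossing span and a vector in the crossing span. -/
open scoped Classical

/-- The vector `ξ_p ∈ (ℂ^N)^{⊗k}`, identified with `(Fin k → Fin N) → ℂ`: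
its coordinate at `i` is `1` if `i` is constant on every block of `p`, else `0`. -/
noncomputable def xi (N : ℕ) {k : ℕ} (p : Finpartition (Finset.univ : Finset (Fin k))) :
    (Fin k → Fin N) → ℂ :=
  fun i => if ∀ x y, PartRel p x y → i x = i y then 1 else 0

/-- The span of the noncrossing-partition vectors `ξ_p`, `p ∈ NC(k)`. -/
noncomputable def ncSpan (N k : ℕ) : Submodule ℂ ((Fin k → Fin N) → ℂ) :=
  Submodule.span ℂ
    {v | ∃ p : Finpartition (Finset.univ : Finset (Fin k)), cr p = ∅ ∧ v = xi N p}

/-- The span of the crossing-partition vectors `ξ_p`, `p ∈ CR(k)`. -/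
noncomputable def crSpan (N k : ℕ) : Submodule ℂ ((Fin k → Fin N) → ℂ) :=
  Submodule.span ℂ
    {v | ∃ p : Finpartition (Finset.univ : Finset (Fin k)), (cr p).Nonempty ∧ v = xi N p}

/-- The span of all partition vectors `ξ_p`, `p ∈ P(k)`. -/
noncomputable def allSpan (N k : ℕ) : Submodule ℂ ((Fin k → Fin N) → ℂ) :=
  Submodule.span ℂ
    {v | ∃ p : Finpartition (Finset.univ : Finset (Fin k)), v = xi N p}


section Aux5

variable {N k : ℕ}

noncomputable def iTuple (hkN : k ≤ N)
    (p : Finpartition (Finset.univ : Finset (Fin k))) (x : Fin k) : Fin N :=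
  Fin.castLE (le_trans p.card_parts_le_card (by simpa using hkN))
    (p.parts.equivFin ⟨p.part x, p.part_mem.mpr (Finset.mem_univ x)⟩)

lemma iTuple_eq_iff (hkN : k ≤ N) (p : Finpartition (Finset.univ : Finset (Fin k)))
    (x y : Fin k) : iTuple hkN p x = iTuple hkN p y ↔ p.part x = p.part y := by
  constructor
  · intro h
    have h1 := Fin.castLE_injective _ h
    have h2 := p.parts.equivFin.injective h1
    exact congrArg Subtype.val h2
  · intro h
    simp only [iTuple]
    exact congrArg _ (congrArg _ (Subtype.ext h))

lemma const_iff (hkN : k ≤ N) (p q : Finpartition (Finset.univ : Finset (Fin k))) :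
    (∀ x y, PartRel q x y → iTuple hkN p x = iTuple hkN p y) ↔ q ≤ p := by
  constructor
  · intro h B hB
    obtain ⟨x, hx⟩ := q.nonempty_of_mem_parts hB
    refine ⟨p.part x, p.part_mem.mpr (Finset.mem_univ x), fun y hy => ?_⟩
    have hxy := h x y ⟨B, hB, hx, hy⟩
    rw [iTuple_eq_iff] at hxy
    exact hxy ▸ p.mem_part (Finset.mem_univ y)
  · rintro hqp x y ⟨B, hB, hx, hy⟩
    obtain ⟨C, hC, hBC⟩ := hqp hB
    rw [iTuple_eq_iff, p.part_eq_of_mem hC (hBC hx), p.part_eq_of_mem hC (hBC hy)]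

lemma xi_eval (hkN : k ≤ N) (p q : Finpartition (Finset.univ : Finset (Fin k))) :
    xi N q (iTuple hkN p) = if q ≤ p then 1 else 0 := by
  simp only [xi]
  exact if_congr (const_iff hkN p q) rfl rfl

lemma xi_linearIndependent (hkN : k ≤ N) :
    LinearIndependent ℂ (fun p : Finpartition (Finset.univ : Finset (Fin k)) => xi N p) := by
  rw [linearIndependent_iff']
  intro s g hsum
  by_contra hcon
  push_neg at hcon
  obtain ⟨i, hi, hgi⟩ := hcon
  set t := s.filter (fun p => g p ≠ 0) with ht
  have htne : t.Nonempty := ⟨i, Finset.mem_filter.mpr ⟨hi, hgi⟩⟩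
  obtain ⟨q, hq, hqmin⟩ := t.exists_minimal htne
  have hq' := Finset.mem_filter.mp hq
  have heval := congrFun hsum (iTuple hkN q)
  simp only [Finset.sum_apply, Pi.smul_apply, smul_eq_mul, Pi.zero_apply] at heval
  have hterm : ∀ p ∈ s, g p * xi N p (iTuple hkN q) = if p = q then g p else 0 := by
    intro p hp
    rw [xi_eval]
    by_cases hgp : g p = 0
    · simp [hgp]
    · have hpt : p ∈ t := Finset.mem_filter.mpr ⟨hp, hgp⟩
      by_cases hpq : p = q
      · simp [hpq]
      · have : ¬ p ≤ q := fun hle => hpq (le_antisymm hle (hqmin hpt hle))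
        simp [this, hpq]
  rw [Finset.sum_congr rfl hterm, Finset.sum_ite_eq' s q g, if_pos hq'.1] at heval
  exact hq'.2 heval

end Aux5

/-- for `k ≤ N`, the noncrossing span and the crossing span intersect
trivially, and every vector in the span of all partition vectors decomposes uniquely
as a sum of a noncrossing-span vector and a crossing-span vector. -/
theorem stmt5 (N k : ℕ) (hN : 0 < N) (hk : 0 < k) (hkN : k ≤ N) :
    ncSpan N k ⊓ crSpan N k = ⊥ ∧
      ∀ v ∈ allSpan N k, ∃ a ∈ ncSpan N k, ∃ b ∈ crSpan N k, v = a + b ∧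
        ∀ a' ∈ ncSpan N k, ∀ b' ∈ crSpan N k, v = a' + b' → a' = a ∧ b' = b := by
  have hli := xi_linearIndependent (N := N) (k := k) hkN
  have hnc : ncSpan N k = Submodule.span ℂ
      ((fun p : Finpartition (Finset.univ : Finset (Fin k)) => xi N p) ''
        {p | cr p = ∅}) := by
    rw [ncSpan]; congr 1; ext v
    constructor
    · rintro ⟨p, hp, rfl⟩; exact ⟨p, hp, rfl⟩
    · rintro ⟨p, hp, rfl⟩; exact ⟨p, hp, rfl⟩
  have hcr : crSpan N k = Submodule.span ℂ
      ((fun p : Finpartition (Finset.univ : Finset (Fin k)) => xi N p) ''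
        {p | (cr p).Nonempty}) := by
    rw [crSpan]; congr 1; ext v
    constructor
    · rintro ⟨p, hp, rfl⟩; exact ⟨p, hp, rfl⟩
    · rintro ⟨p, hp, rfl⟩; exact ⟨p, hp, rfl⟩
  have hdisj : Disjoint (ncSpan N k) (crSpan N k) := by
    rw [hnc, hcr]
    apply hli.disjoint_span_image
    rw [Set.disjoint_left]
    rintro p hp1 hp2
    exact hp2.ne_empty hp1
  have hinf : ncSpan N k ⊓ crSpan N k = ⊥ := disjoint_iff.mp hdisj
  refine ⟨hinf, fun v hv => ?_⟩
  have hall : allSpan N k ≤ ncSpan N k ⊔ crSpan N k := by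
    rw [allSpan]
    apply Submodule.span_le.mpr
    rintro _ ⟨p, rfl⟩
    by_cases hp : cr p = ∅
    · exact Submodule.mem_sup_left (Submodule.subset_span ⟨p, hp, rfl⟩)
    · exact Submodule.mem_sup_right
        (Submodule.subset_span ⟨p, Set.nonempty_iff_ne_empty.mpr hp, rfl⟩)
  obtain ⟨a, ha, b, hb, hab⟩ := Submodule.mem_sup.mp (hall hv)
  refine ⟨a, ha, b, hb, hab.symm, ?_⟩
  intro a' ha' b' hb' hv'
  have key : a' - a ∈ ncSpan N k ⊓ crSpan N k := by
    refine ⟨Submodule.sub_mem _ ha' ha, ?_⟩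
    have h0 : a + b = a' + b' := hab.trans hv'
    have : a' - a = b - b' := by
      rw [sub_eq_sub_iff_add_eq_add, ← h0]
      exact add_comm a b
    rw [this]
    exact Submodule.sub_mem _ hb hb'
  rw [hinf, Submodule.mem_bot, sub_eq_zero] at key
  constructor
  · exact key
  · have := hab.trans hv'
    rw [key] at this
    exact (add_left_cancel this).symm
end

section
/- For every integer N ≥ 3, the intersection span{ξ_p : p ∈ NC(N+1)} ∩ span{ξ_p : p ∈ CR(N+1)}, taken inside ((Fin (N+1) → Fin N) → ℂ), is a one-dimensional subspace. In particular, there exists a nonzero linear combination of crossing-partition vectors ξ_p (p ∈ CR(N+1)) that lies in the span of the noncrossing-partition vectors, and it is unique up to scaling. -/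
open scoped Classical

set_option maxRecDepth 4000

namespace Aux6

open Finset

variable {n N : ℕ}

abbrev Pt (n : ℕ) := Finpartition (Finset.univ : Finset (Fin n))

lemma partRel_iff_part {p : Pt n} {x y : Fin n} : PartRel p x y ↔ y ∈ p.part x := by
  constructor
  · rintro ⟨B, hB, hx, hy⟩
    rwa [p.part_eq_of_mem hB hx]
  · intro h
    exact ⟨p.part x, p.part_mem.2 (mem_univ x), p.mem_part (mem_univ x), h⟩

lemma partRel_refl (p : Pt n) (x : Fin n) : PartRel p x x :=
  partRel_iff_part.2 (p.mem_part (mem_univ x))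

lemma partRel_symm {p : Pt n} {x y : Fin n} (h : PartRel p x y) : PartRel p y x := by
  obtain ⟨B, hB, hx, hy⟩ := h; exact ⟨B, hB, hy, hx⟩

def Disc (p : Pt n) : Prop := ∀ x y, PartRel p x y → x = y

lemma le_iff_rel {p q : Pt n} : p ≤ q ↔ ∀ x y, PartRel p x y → PartRel q x y := by
  constructor
  · rintro h x y ⟨B, hB, hx, hy⟩
    obtain ⟨C, hC, hBC⟩ := h hB
    exact ⟨C, hC, hBC hx, hBC hy⟩
  · intro h B hB
    obtain ⟨x, hx⟩ := p.nonempty_of_mem_parts hB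
    refine ⟨q.part x, q.part_mem.2 (mem_univ x), fun y hy => ?_⟩
    exact partRel_iff_part.1 (h x y ⟨B, hB, hx, hy⟩)

lemma rel_ext {p q : Pt n} (h : ∀ x y, PartRel p x y ↔ PartRel q x y) : p = q :=
  le_antisymm (le_iff_rel.2 fun x y hxy => (h x y).1 hxy)
    (le_iff_rel.2 fun x y hxy => (h x y).2 hxy)

lemma disc_le {p : Pt n} (h : Disc p) (q : Pt n) : p ≤ q :=
  le_iff_rel.2 fun x y hxy => (h x y hxy) ▸ partRel_refl q x

lemma disc_unique {p q : Pt n} (hp : Disc p) (hq : Disc q) : p = q :=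
  le_antisymm (disc_le hp q) (disc_le hq p)

noncomputable def kpart {α : Type*} [DecidableEq α] (g : Fin n → α) : Pt n :=
  Finpartition.ofSetoid (Setoid.ker g)

lemma partRel_kpart {α : Type*} [DecidableEq α] {g : Fin n → α} {x y : Fin n} :
    PartRel (kpart g) x y ↔ g x = g y := by
  rw [partRel_iff_part]
  exact Finpartition.mem_part_ofSetoid_iff_rel

lemma disc_kpart_id : Disc (kpart (id : Fin n → Fin n)) := by
  intro x y h
  exact partRel_kpart.1 h

lemma card_parts_le (q : Pt (N + 1)) (hq : ¬ Disc q) : q.parts.card ≤ N := by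
  simp only [Disc, not_forall] at hq
  obtain ⟨x, y, hxy, hne⟩ := hq
  have h2 : 1 < (q.part x).card :=
    Finset.one_lt_card.2 ⟨x, q.mem_part (mem_univ x), y, partRel_iff_part.1 hxy,
      hne⟩
  have hsum : ∑ _B ∈ q.parts, 1 < ∑ B ∈ q.parts, B.card :=
    Finset.sum_lt_sum (fun B hB => Finset.card_pos.2 (q.nonempty_of_mem_parts hB))
      ⟨q.part x, q.part_mem.2 (mem_univ x), h2⟩
  have hc := q.sum_card_parts
  simp only [Finset.sum_const, smul_eq_mul, mul_one, Finset.card_univ, Fintype.card_fin] at hsum hc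
  omega

lemma exists_eval (q : Pt (N + 1)) (hq : ¬ Disc q) :
    ∃ i : Fin (N + 1) → Fin N, ∀ x y, PartRel q x y ↔ i x = i y := by
  have hcard : Fintype.card {B // B ∈ q.parts} ≤ Fintype.card (Fin N) := by
    simpa [Fintype.card_coe] using card_parts_le q hq
  obtain ⟨f⟩ := Function.Embedding.nonempty_of_card_le hcard
  refine ⟨fun x => f ⟨q.part x, q.part_mem.2 (mem_univ x)⟩, fun x y => ?_⟩
  rw [partRel_iff_part]
  constructor
  · intro h
    have hpq : q.part y = q.part x :=
      (q.mem_part_iff_part_eq_part (mem_univ y) (mem_univ x)).1 h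
    exact congrArg f (Subtype.ext hpq.symm)
  · intro h
    have hpq : q.part x = q.part y := congrArg Subtype.val (f.injective h)
    rw [q.mem_part_iff_part_eq_part (mem_univ y) (mem_univ x)]
    exact hpq.symm

lemma cond_iff_le {p q : Pt n} {i : Fin n → Fin N} (hi : ∀ x y, PartRel q x y ↔ i x = i y) :
    (∀ x y, PartRel p x y → i x = i y) ↔ p ≤ q := by
  rw [le_iff_rel]
  exact ⟨fun h x y hp => (hi x y).2 (h x y hp), fun h x y hp => (hi x y).1 (h x y hp)⟩

lemma sum_ind_eq_zero {c : Pt (N + 1) → ℂ}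
    (h : ∑ p : Pt (N + 1), c p • xi N p = 0) (q : Pt (N + 1)) (hq : ¬ Disc q) :
    ∑ p : Pt (N + 1), c p * (if p ≤ q then 1 else 0) = 0 := by
  obtain ⟨i, hi⟩ := exists_eval q hq
  have h2 := congrFun h i
  rw [Finset.sum_apply] at h2
  simp only [Pi.smul_apply, xi, smul_eq_mul, Pi.zero_apply] at h2
  rw [show (∑ p : Pt (N + 1), c p * (if p ≤ q then 1 else 0)) =
      ∑ p : Pt (N + 1), c p * (if ∀ x y, PartRel p x y → i x = i y then 1 else 0) from
    Finset.sum_congr rfl fun p _ => by rw [if_congr (cond_iff_le hi).symm rfl rfl]]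
  exact h2

lemma all_zero {c : Pt (N + 1) → ℂ}
    (hf : ∀ q : Pt (N + 1), ¬ Disc q → ∑ p : Pt (N + 1), c p * (if p ≤ q then 1 else 0) = 0)
    (hd : ∀ p, Disc p → c p = 0) : ∀ p, c p = 0 := by
  by_contra hcon
  push_neg at hcon
  set T := Finset.univ.filter (fun p : Pt (N + 1) => c p ≠ 0) with hT
  have hTne : T.Nonempty := by
    obtain ⟨p, hp⟩ := hcon; exact ⟨p, by simp [hT, hp]⟩
  obtain ⟨p₀, hp₀T, hmin⟩ := T.exists_minimal hTne
  have hc₀ : c p₀ ≠ 0 := by simpa [hT] using hp₀T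
  have hnd : ¬ Disc p₀ := fun h => hc₀ (hd _ h)
  have h0 := hf p₀ hnd
  rw [Finset.sum_eq_single p₀] at h0
  · simp at h0; exact hc₀ h0
  · intro p _ hne
    by_cases hcp : c p = 0
    · simp [hcp]
    · have hpT : p ∈ T := by simp [hT, hcp]
      have hnle : ¬ p ≤ p₀ := fun hle => hne (le_antisymm hle (hmin hpT hle))
      simp [hnle]
  · simp

section FinMaps
variable {a b c d : Fin n}

lemma fcomp1 (hab : a ≠ b) (had : a ≠ d) (hbc : b ≠ c) (hcd : c ≠ d) (x : Fin n) :
    (fun z => if z = d then b else z) ((fun z => if z = c then a else z) x) =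
      (if x = c then a else if x = d then b else x) := by
  by_cases h1 : x = c <;> by_cases h2 : x = d <;> simp_all

lemma fcomp2 (hab : a ≠ b) (had : a ≠ d) (hbc : b ≠ c) (hcd : c ≠ d) (x : Fin n) :
    (fun z => if z = c then a else z) ((fun z => if z = d then b else z) x) =
      (if x = c then a else if x = d then b else x) := by
  by_cases h1 : x = c <;> by_cases h2 : x = d <;> simp_all

lemma finj (hac : a ≠ c) (hbd : b ≠ d) (had : a ≠ d) (hbc : b ≠ c) (hcd : c ≠ d) {x y : Fin n}
    (h1 : (if x = c then a else x) = (if y = c then a else y))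
    (h2 : (if x = d then b else x) = (if y = d then b else y)) : x = y := by
  by_cases hx : x = c <;> by_cases hy : y = c <;>
    by_cases hx' : x = d <;> by_cases hy' : y = d <;> subst_vars <;> simp_all

lemma fpair_bd (hab : a ≠ b) (hac : a ≠ c) (had : a ≠ d) (hbc : b ≠ c) (hbd : b ≠ d)
    (hcd : c ≠ d) {x y : Fin n}
    (h0 : (if x = c then a else if x = d then b else x) =
      (if y = c then a else if y = d then b else y))
    (h1 : (if x = c then a else x) ≠ (if y = c then a else y)) :
    (x = b ∧ y = d) ∨ (x = d ∧ y = b) := by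
  by_cases hx : x = c <;> by_cases hy : y = c <;>
    by_cases hx' : x = d <;> by_cases hy' : y = d <;> subst_vars <;> simp_all

lemma fpair_ac (hab : a ≠ b) (hac : a ≠ c) (had : a ≠ d) (hbc : b ≠ c) (hbd : b ≠ d)
    (hcd : c ≠ d) {x y : Fin n}
    (h0 : (if x = c then a else if x = d then b else x) =
      (if y = c then a else if y = d then b else y))
    (h1 : (if x = d then b else x) ≠ (if y = d then b else y)) :
    (x = a ∧ y = c) ∨ (x = c ∧ y = a) := by
  by_cases hx : x = c <;> by_cases hy : y = c <;>
    by_cases hx' : x = d <;> by_cases hy' : y = d <;> subst_vars <;> simp_all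

end FinMaps

lemma disc_zero_of_nc {a b c d : Fin (N + 1)} (hab : a < b) (hbc : b < c) (hcd : c < d)
    {cf : Pt (N + 1) → ℂ}
    (hsupp : ∀ p, cf p ≠ 0 → cr p = ∅)
    (hf : ∀ q, ¬ Disc q → ∑ p : Pt (N + 1), cf p * (if p ≤ q then 1 else 0) = 0) :
    ∀ p₀, Disc p₀ → cf p₀ = 0 := by
  intro p₀ hp₀
  have hab' : a ≠ b := ne_of_lt hab
  have hbc' : b ≠ c := ne_of_lt hbc
  have hcd' : c ≠ d := ne_of_lt hcd
  have hac' : a ≠ c := ne_of_lt (hab.trans hbc)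
  have hbd' : b ≠ d := ne_of_lt (hbc.trans hcd)
  have had' : a ≠ d := ne_of_lt ((hab.trans hbc).trans hcd)
  set Pac := kpart (fun z : Fin (N + 1) => if z = c then a else z) with hPacd
  set Pbd := kpart (fun z : Fin (N + 1) => if z = d then b else z) with hPbdd
  set Q0 := kpart (fun z : Fin (N + 1) => if z = c then a else if z = d then b else z) with hQ0d
  have hrelac : ∀ x y : Fin (N + 1), PartRel Pac x y ↔
      (if x = c then a else x) = (if y = c then a else y) := fun x y => partRel_kpart
  have hrelbd : ∀ x y : Fin (N + 1), PartRel Pbd x y ↔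
      (if x = d then b else x) = (if y = d then b else y) := fun x y => partRel_kpart
  have hrel0 : ∀ x y : Fin (N + 1), PartRel Q0 x y ↔
      (if x = c then a else if x = d then b else x) =
        (if y = c then a else if y = d then b else y) := fun x y => partRel_kpart
  -- nondiscreteness
  have hndac : ¬ Disc Pac := fun h => hac' (h a c ((hrelac a c).2 (by simp [hac'])))
  have hndbd : ¬ Disc Pbd := fun h => hbd' (h b d ((hrelbd b d).2 (by simp [hbd'])))
  have hnd0 : ¬ Disc Q0 := fun h => hac' (h a c ((hrel0 a c).2 (by simp [hac', had'])))
  -- Pac ≤ Q0, Pbd ≤ Q0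
  have hPacQ0 : Pac ≤ Q0 := by
    rw [le_iff_rel]
    intro x y hxy
    rw [hrel0]
    rw [hrelac] at hxy
    rw [← fcomp1 hab' had' hbc' hcd' x, ← fcomp1 hab' had' hbc' hcd' y]
    exact congrArg (fun z => if z = d then b else z) hxy
  have hPbdQ0 : Pbd ≤ Q0 := by
    rw [le_iff_rel]
    intro x y hxy
    rw [hrel0]
    rw [hrelbd] at hxy
    rw [← fcomp2 hab' had' hbc' hcd' x, ← fcomp2 hab' had' hbc' hcd' y]
    exact congrArg (fun z => if z = c then a else z) hxy
  -- p ≤ Pac ∧ p ≤ Pbd → Disc p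
  have hboth : ∀ p : Pt (N + 1), p ≤ Pac → p ≤ Pbd → Disc p := by
    intro p h1 h2 x y hxy
    exact finj hac' hbd' had' hbc' hcd'
      ((hrelac x y).1 (le_iff_rel.1 h1 x y hxy)) ((hrelbd x y).1 (le_iff_rel.1 h2 x y hxy))
  -- p ≤ Q0 noncrossing → p ≤ Pac ∨ p ≤ Pbd
  have hsplit : ∀ p : Pt (N + 1), p ≤ Q0 → cr p = ∅ → p ≤ Pac ∨ p ≤ Pbd := by
    intro p hle hnc
    by_contra hcon
    push_neg at hcon
    obtain ⟨hn1, hn2⟩ := hcon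
    rw [le_iff_rel] at hn1 hn2
    push_neg at hn1 hn2
    obtain ⟨x, y, hxy, hnxy⟩ := hn1
    obtain ⟨u, v, huv, hnuv⟩ := hn2
    have h0xy := (hrel0 x y).1 (le_iff_rel.1 hle x y hxy)
    have h0uv := (hrel0 u v).1 (le_iff_rel.1 hle u v huv)
    have hxybd : (x = b ∧ y = d) ∨ (x = d ∧ y = b) := by
      refine fpair_bd hab' hac' had' hbc' hbd' hcd' h0xy ?_
      intro h; exact hnxy ((hrelac x y).2 h)
    have huvac : (u = a ∧ v = c) ∨ (u = c ∧ v = a) := by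
      refine fpair_ac hab' hac' had' hbc' hbd' hcd' h0uv ?_
      intro h; exact hnuv ((hrelbd u v).2 h)
    have hrelpbd : PartRel p b d := by
      rcases hxybd with ⟨h1, h2⟩ | ⟨h1, h2⟩
      · rwa [h1, h2] at hxy
      · rw [h1, h2] at hxy; exact partRel_symm hxy
    have hrelpac : PartRel p a c := by
      rcases huvac with ⟨h1, h2⟩ | ⟨h1, h2⟩
      · rwa [h1, h2] at huv
      · rw [h1, h2] at huv; exact partRel_symm huv
    have hnab : ¬ PartRel p a b := by
      intro h
      have h2 := (hrel0 a b).1 (le_iff_rel.1 hle a b h)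
      simp [hac', had', hbc', hbd'] at h2
      exact hab' h2
    have hcross : ({a, b, c, d} : Finset (Fin (N + 1))) ∈ cr p :=
      ⟨a, b, c, d, hab, hbc, hcd, rfl, hrelpac, hrelpbd, hnab⟩
    rw [hnc] at hcross
    exact hcross
  -- the indicator identity
  have key : ∀ p : Pt (N + 1),
      cf p * (if p ≤ Q0 then 1 else 0) =
        cf p * (if p ≤ Pac then 1 else 0) + cf p * (if p ≤ Pbd then 1 else 0)
          - cf p * (if Disc p then 1 else 0) := by
    intro p
    by_cases hcp : cf p = 0
    · simp [hcp]
    have hnc := hsupp p hcp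
    by_cases hle : p ≤ Q0
    · by_cases hdisc : Disc p
      · rw [if_pos hle, if_pos (disc_le hdisc Pac), if_pos (disc_le hdisc Pbd),
          if_pos hdisc]
        ring
      · rcases hsplit p hle hnc with h1 | h1
        · have h2 : ¬ p ≤ Pbd := fun h => hdisc (hboth p h1 h)
          rw [if_pos hle, if_pos h1, if_neg h2, if_neg hdisc]
          ring
        · have h2 : ¬ p ≤ Pac := fun h => hdisc (hboth p h h1)
          rw [if_pos hle, if_pos h1, if_neg h2, if_neg hdisc]
          ring
    · have h1 : ¬ p ≤ Pac := fun h => hle (h.trans hPacQ0)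
      have h2 : ¬ p ≤ Pbd := fun h => hle (h.trans hPbdQ0)
      have h3 : ¬ Disc p := fun h => hle (disc_le h Q0)
      rw [if_neg hle, if_neg h1, if_neg h2, if_neg h3]
      ring
  have hsumkey : ∑ p : Pt (N + 1), cf p * (if p ≤ Q0 then 1 else 0) =
      (∑ p : Pt (N + 1), cf p * (if p ≤ Pac then 1 else 0)) +
        (∑ p : Pt (N + 1), cf p * (if p ≤ Pbd then 1 else 0)) -
          ∑ p : Pt (N + 1), cf p * (if Disc p then 1 else 0) := by
    rw [← Finset.sum_add_distrib, ← Finset.sum_sub_distrib]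
    exact Finset.sum_congr rfl fun p _ => key p
  rw [hf Q0 hnd0, hf Pac hndac, hf Pbd hndbd] at hsumkey
  have hsingle : ∑ p : Pt (N + 1), cf p * (if Disc p then 1 else 0) = cf p₀ := by
    rw [Finset.sum_eq_single p₀]
    · rw [if_pos hp₀, mul_one]
    · intro p _ hne
      rw [if_neg fun h => hne (disc_unique h hp₀), mul_zero]
    · simp
  rw [hsingle] at hsumkey
  linear_combination hsumkey
-- discrete partitions are noncrossing
lemma disc_cr_empty {p : Pt n} (hp : Disc p) : cr p = ∅ := by
  ext κ
  simp only [cr, Set.mem_setOf_eq, Set.mem_empty_iff_false, iff_false]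
  rintro ⟨a, b, c, d, hab, hbc, hcd, -, hac, -, -⟩
  exact absurd (hp a c hac) (ne_of_lt (hab.trans hbc))

-- the unified linear independence lemma
lemma indep (P : Pt (N + 1) → Prop)
    (hP : ∀ c : Pt (N + 1) → ℂ, (∀ p, c p ≠ 0 → P p) →
      (∀ q, ¬ Disc q → ∑ p : Pt (N + 1), c p * (if p ≤ q then 1 else 0) = 0) →
      ∀ p, Disc p → c p = 0) :
    LinearIndependent ℂ (fun p : {p : Pt (N + 1) // P p} => xi N p.1) := by
  rw [Fintype.linearIndependent_iff]
  intro g hg j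
  set c : Pt (N + 1) → ℂ := fun p => if h : P p then g ⟨p, h⟩ else 0 with hc
  have hsupp : ∀ p, c p ≠ 0 → P p := by
    intro p hp
    by_contra h
    exact hp (by simp [hc, h])
  have hzero : ∑ p : Pt (N + 1), c p • xi N p = 0 := by
    have e1 : ∑ p ∈ univ.filter P, c p • xi N p = ∑ p : Pt (N + 1), c p • xi N p :=
      Finset.sum_filter_of_ne
        (fun p _ hne => hsupp p (fun h0 => hne (by rw [h0, zero_smul])))
    have e2 : ∑ p ∈ univ.filter P, c p • xi N p = ∑ j : {p : Pt (N + 1) // P p}, c j.1 • xi N j.1 :=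
      Finset.sum_subtype (univ.filter P) (by simp) (fun p => c p • xi N p)
    have e3 : ∑ j : {p : Pt (N + 1) // P p}, c j.1 • xi N j.1 = ∑ j : {p : Pt (N + 1) // P p}, g j • xi N j.1 :=
      Finset.sum_congr rfl fun j _ => by simp [hc, j.2]
    rw [← e1, e2, e3, hg]
  have hd := hP c hsupp (sum_ind_eq_zero hzero)
  have := all_zero (sum_ind_eq_zero hzero) hd j.1
  simpa [hc, j.2] using this

-- the three instances
lemma indep_nc (hN : 3 ≤ N) :
    LinearIndependent ℂ (fun p : {p : Pt (N + 1) // cr p = ∅} => xi N p.1) := by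
  refine indep _ fun c hsupp hf => ?_
  have h0 : (0 : ℕ) < N + 1 := by omega
  have h1 : (1 : ℕ) < N + 1 := by omega
  have h2 : (2 : ℕ) < N + 1 := by omega
  have h3 : (3 : ℕ) < N + 1 := by omega
  exact disc_zero_of_nc (a := ⟨0, h0⟩) (b := ⟨1, h1⟩) (c := ⟨2, h2⟩) (d := ⟨3, h3⟩)
    (by simp [Fin.lt_def]) (by simp [Fin.lt_def]) (by simp [Fin.lt_def]) hsupp hf

lemma indep_cr :
    LinearIndependent ℂ (fun p : {p : Pt (N + 1) // (cr p).Nonempty} => xi N p.1) := by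
  refine indep _ fun c hsupp hf p hdisc => ?_
  by_contra h
  exact Set.not_nonempty_empty (disc_cr_empty hdisc ▸ hsupp p h)

lemma indep_nd :
    LinearIndependent ℂ (fun p : {p : Pt (N + 1) // ¬ Disc p} => xi N p.1) := by
  refine indep _ fun c hsupp hf p hdisc => ?_
  by_contra h
  exact hsupp p h hdisc

noncomputable def evec (N : ℕ) {n : ℕ} (q : Pt n) : (Fin n → Fin N) → ℂ :=
  fun i => if ∀ x y, PartRel q x y ↔ i x = i y then 1 else 0

lemma xi_eq_sum (p : Pt (N + 1)) :
    xi N p =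
      ∑ q : {q : Pt (N + 1) // ¬ Disc q}, (if p ≤ q.1 then (1 : ℂ) else 0) • evec N q.1 := by
  funext i
  rw [Finset.sum_apply]
  set qi := kpart i with hqi
  have hrel : ∀ x y, PartRel qi x y ↔ i x = i y := fun x y => partRel_kpart
  have hnd : ¬ Disc qi := by
    obtain ⟨x, y, hxy, hne⟩ := Fintype.exists_ne_map_eq_of_card_lt i
      (by simp only [Fintype.card_fin]; omega)
    exact fun h => hxy (h x y ((hrel x y).2 hne))
  rw [Finset.sum_eq_single (⟨qi, hnd⟩ : {q : Pt (N + 1) // ¬ Disc q})]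
  · have h1 : evec N qi i = 1 := if_pos hrel
    simp only [Pi.smul_apply, h1, smul_eq_mul, mul_one, xi]
    rw [if_congr (cond_iff_le hrel) rfl rfl]
  · intro q _ hne
    have h0 : evec N q.1 i = 0 := by
      rw [evec, if_neg]
      intro hcond
      exact hne (Subtype.ext (rel_ext (fun x y => (hcond x y).trans (hrel x y).symm)))
    simp [h0]
  · simp

-- cardinalities
lemma card_disc : Fintype.card {p : Pt (N + 1) // Disc p} = 1 :=
  Fintype.card_eq_one_iff.2
    ⟨⟨kpart id, disc_kpart_id⟩, fun q => Subtype.ext (disc_unique q.2 disc_kpart_id)⟩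

lemma card_ndisc :
    Fintype.card {p : Pt (N + 1) // ¬ Disc p} = Fintype.card (Pt (N + 1)) - 1 := by
  rw [Fintype.card_subtype_compl, card_disc]

-- rank of allSpan
lemma finrank_allSpan :
    Module.finrank ℂ (allSpan N (N + 1)) = Fintype.card (Pt (N + 1)) - 1 := by
  apply le_antisymm
  · -- upper bound via evec
    have hle : allSpan N (N + 1) ≤
        Submodule.span ℂ (Set.range fun q : {q : Pt (N + 1) // ¬ Disc q} => evec N q.1) := by
      rw [allSpan, Submodule.span_le]
      rintro v ⟨p, rfl⟩
      rw [xi_eq_sum p]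
      exact Submodule.sum_mem _ fun q _ =>
        Submodule.smul_mem _ _ (Submodule.subset_span ⟨q, rfl⟩)
    calc Module.finrank ℂ (allSpan N (N + 1)) ≤
        Module.finrank ℂ (Submodule.span ℂ
          (Set.range fun q : {q : Pt (N + 1) // ¬ Disc q} => evec N q.1)) :=
          Submodule.finrank_mono hle
      _ ≤ Fintype.card {q : Pt (N + 1) // ¬ Disc q} := finrank_range_le_card _
      _ = Fintype.card (Pt (N + 1)) - 1 := card_ndisc
  · -- lower bound via independent xi family
    have hle : Submodule.span ℂ (Set.range fun p : {p : Pt (N + 1) // ¬ Disc p} => xi N p.1) ≤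
        allSpan N (N + 1) := by
      rw [Submodule.span_le]
      rintro v ⟨p, rfl⟩
      exact Submodule.subset_span ⟨p.1, rfl⟩
    calc Fintype.card (Pt (N + 1)) - 1
        = Fintype.card {p : Pt (N + 1) // ¬ Disc p} := card_ndisc.symm
      _ = Module.finrank ℂ (Submodule.span ℂ
          (Set.range fun p : {p : Pt (N + 1) // ¬ Disc p} => xi N p.1)) :=
          (finrank_span_eq_card indep_nd).symm
      _ ≤ Module.finrank ℂ (allSpan N (N + 1)) := Submodule.finrank_mono hle

lemma ncSpan_eq_range :
    ncSpan N (N + 1) =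
      Submodule.span ℂ (Set.range fun p : {p : Pt (N + 1) // cr p = ∅} => xi N p.1) := by
  rw [ncSpan]
  congr 1
  ext v
  constructor
  · rintro ⟨p, hp, rfl⟩; exact ⟨⟨p, hp⟩, rfl⟩
  · rintro ⟨⟨p, hp⟩, rfl⟩; exact ⟨p, hp, rfl⟩

lemma crSpan_eq_range :
    crSpan N (N + 1) =
      Submodule.span ℂ (Set.range fun p : {p : Pt (N + 1) // (cr p).Nonempty} => xi N p.1) := by
  rw [crSpan]
  congr 1
  ext v
  constructor
  · rintro ⟨p, hp, rfl⟩; exact ⟨⟨p, hp⟩, rfl⟩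
  · rintro ⟨⟨p, hp⟩, rfl⟩; exact ⟨p, hp, rfl⟩

lemma finrank_ncSpan (hN : 3 ≤ N) :
    Module.finrank ℂ (ncSpan N (N + 1)) = Fintype.card {p : Pt (N + 1) // cr p = ∅} := by
  rw [ncSpan_eq_range]
  exact finrank_span_eq_card (indep_nc hN)

lemma finrank_crSpan :
    Module.finrank ℂ (crSpan N (N + 1)) = Fintype.card {p : Pt (N + 1) // (cr p).Nonempty} := by
  rw [crSpan_eq_range]
  exact finrank_span_eq_card indep_cr

lemma sup_eq_allSpan : ncSpan N (N + 1) ⊔ crSpan N (N + 1) = allSpan N (N + 1) := by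
  rw [ncSpan, crSpan, allSpan, ← Submodule.span_union]
  congr 1
  ext v
  constructor
  · rintro (⟨p, -, rfl⟩ | ⟨p, -, rfl⟩) <;> exact ⟨p, rfl⟩
  · rintro ⟨p, rfl⟩
    by_cases h : cr p = ∅
    · exact Or.inl ⟨p, h, rfl⟩
    · exact Or.inr ⟨p, Set.nonempty_iff_ne_empty.2 h, rfl⟩

lemma card_split :
    Fintype.card {p : Pt (N + 1) // cr p = ∅} +
      Fintype.card {p : Pt (N + 1) // (cr p).Nonempty} = Fintype.card (Pt (N + 1)) := by
  have e : Fintype.card {p : Pt (N + 1) // (cr p).Nonempty} =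
      Fintype.card {p : Pt (N + 1) // ¬ cr p = ∅} :=
    Fintype.card_congr (Equiv.subtypeEquivRight fun p => Set.nonempty_iff_ne_empty)
  rw [e, Fintype.card_subtype_compl]
  have hle : Fintype.card {p : Pt (N + 1) // cr p = ∅} ≤ Fintype.card (Pt (N + 1)) :=
    Fintype.card_subtype_le _
  omega

end Aux6

/-- for `N ≥ 3`, inside `((Fin (N+1) → Fin N) → ℂ)`, the intersection
of the noncrossing span and the crossing span is one-dimensional. -/
theorem stmt6 (N : ℕ) (hN : 3 ≤ N) :
    Module.finrank ℂ ↥(ncSpan N (N + 1) ⊓ crSpan N (N + 1)) = 1 := by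
  have hdim := Submodule.finrank_sup_add_finrank_inf_eq (ncSpan N (N + 1)) (crSpan N (N + 1))
  rw [Aux6.sup_eq_allSpan, Aux6.finrank_allSpan, Aux6.finrank_ncSpan hN,
    Aux6.finrank_crSpan] at hdim
  have hsplit := Aux6.card_split (N := N)
  have hpos : 1 ≤ Fintype.card (Aux6.Pt (N + 1)) := Fintype.card_pos
  omega
end

section
/- At parameter N = 3, the vector ξ_c of the crossing partition c = {{1,3},{2,4}} of [4] lies in the span of the noncrossing-partition vectors: ξ_c ∈ span{ξ_p : p ∈ NC(4)} inside ((Fin 4 → Fin 3) → ℂ). -/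
open scoped Classical

/- ## Auxiliary machinery -/

instance kerDec {n m : ℕ} (f : Fin n → Fin m) : DecidableRel (Setoid.ker f).r :=
  fun a b => inferInstanceAs (Decidable (f a = f b))

/-- The partition of `Fin n` induced by a labeling function `f`. -/
def partOf {n m : ℕ} (f : Fin n → Fin m) : Finpartition (Finset.univ : Finset (Fin n)) :=
  Finpartition.ofSetoid (Setoid.ker f)

lemma partRel_partOf {n m : ℕ} (f : Fin n → Fin m) (x y : Fin n) :
    PartRel (partOf f) x y ↔ f x = f y := by
  constructor
  · rintro ⟨B, hB, hx, hy⟩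
    have hB' : ∃ a, Finset.filter (fun b => f a = f b) Finset.univ = B := by
      simpa [partOf, Finpartition.ofSetoid, Finpartition.ofSetSetoid, Setoid.ker, Function.onFun] using hB
    obtain ⟨a, rfl⟩ := hB'
    simp only [Finset.mem_filter] at hx hy
    exact hx.2.symm.trans hy.2
  · intro h
    refine ⟨Finset.filter (fun b => f x = f b) Finset.univ, ?_, ?_, ?_⟩
    · simp only [partOf, Finpartition.ofSetoid, Finpartition.ofSetSetoid, Finset.mem_image]
      exact ⟨x, Finset.mem_univ x, rfl⟩
    · simp
    · simp [h]

lemma cr_partOf_empty {n m : ℕ} {f : Fin n → Fin m}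
    (h : ∀ a b c d : Fin n, a < b → b < c → c < d → f a = f c → f b = f d → f a = f b) :
    cr (partOf f) = ∅ := by
  ext κ
  simp only [cr, Set.mem_setOf_eq, Set.mem_empty_iff_false, iff_false]
  rintro ⟨a, b, c, d, h1, h2, h3, -, h5, h6, h7⟩
  rw [partRel_partOf] at h5 h6 h7
  exact h7 (h a b c d h1 h2 h3 h5 h6)

lemma xi_partOf_eq {N n m : ℕ} (f : Fin n → Fin m) :
    xi N (partOf f) = fun i => if ∀ x y, f x = f y → i x = i y then (1 : ℂ) else 0 := by
  funext i
  exact if_congr (forall_congr' fun x => forall_congr' fun y =>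
    imp_congr (partRel_partOf f x y) Iff.rfl) rfl rfl

/-- Integer indicator of `i` being constant on the blocks of the partition labeled by `f`. -/
def indZ {n m N : ℕ} (f : Fin n → Fin m) (i : Fin n → Fin N) : ℤ :=
  if ∀ x y, f x = f y → i x = i y then 1 else 0

lemma key : ∀ i : Fin 4 → Fin 3,
    (if ∀ x y : Fin 4, (x : ℕ) % 2 = (y : ℕ) % 2 → i x = i y then (1 : ℤ) else 0) =
      6 * indZ (![0,0,0,0] : Fin 4 → Fin 4) i - 2 * indZ (![0,1,1,1] : Fin 4 → Fin 4) i - indZ (![0,0,1,1] : Fin 4 → Fin 4) i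
        - 2 * indZ (![0,1,0,0] : Fin 4 → Fin 4) i + indZ (![0,1,2,2] : Fin 4 → Fin 4) i - 2 * indZ (![0,0,0,1] : Fin 4 → Fin 4) i
        - indZ (![0,1,1,0] : Fin 4 → Fin 4) i + indZ (![0,1,1,2] : Fin 4 → Fin 4) i - 2 * indZ (![0,0,1,0] : Fin 4 → Fin 4) i
        + indZ (![0,1,2,1] : Fin 4 → Fin 4) i + indZ (![0,0,1,2] : Fin 4 → Fin 4) i + indZ (![0,1,0,2] : Fin 4 → Fin 4) i
        + indZ (![0,1,2,0] : Fin 4 → Fin 4) i - indZ (![0,1,2,3] : Fin 4 → Fin 4) i := by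
  decide

/-- at parameter `N = 3`, the vector of the crossing partition
`{{1,3},{2,4}}` of `[4]` (in `Fin 4`: `x ∼ y` iff `x ≡ y (mod 2)`) lies in the
span of the noncrossing-partition vectors. -/
theorem stmt8 (c : Finpartition (Finset.univ : Finset (Fin 4)))
    (hc : ∀ x y : Fin 4, PartRel c x y ↔ (x : ℕ) % 2 = (y : ℕ) % 2) :
    xi 3 c ∈ ncSpan 3 4 := by
  have hxc : xi 3 c = fun i : Fin 4 → Fin 3 =>
      if ∀ x y : Fin 4, (x : ℕ) % 2 = (y : ℕ) % 2 → i x = i y then (1 : ℂ) else 0 := by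
    funext i
    exact if_congr (forall_congr' fun x => forall_congr' fun y =>
      imp_congr (hc x y) Iff.rfl) rfl rfl
  have heq : xi 3 c =
      (6 : ℂ) • xi 3 (partOf (![0,0,0,0] : Fin 4 → Fin 4)) - (2 : ℂ) • xi 3 (partOf (![0,1,1,1] : Fin 4 → Fin 4))
        - xi 3 (partOf (![0,0,1,1] : Fin 4 → Fin 4)) - (2 : ℂ) • xi 3 (partOf (![0,1,0,0] : Fin 4 → Fin 4))
        + xi 3 (partOf (![0,1,2,2] : Fin 4 → Fin 4)) - (2 : ℂ) • xi 3 (partOf (![0,0,0,1] : Fin 4 → Fin 4))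
        - xi 3 (partOf (![0,1,1,0] : Fin 4 → Fin 4)) + xi 3 (partOf (![0,1,1,2] : Fin 4 → Fin 4))
        - (2 : ℂ) • xi 3 (partOf (![0,0,1,0] : Fin 4 → Fin 4)) + xi 3 (partOf (![0,1,2,1] : Fin 4 → Fin 4))
        + xi 3 (partOf (![0,0,1,2] : Fin 4 → Fin 4)) + xi 3 (partOf (![0,1,0,2] : Fin 4 → Fin 4))
        + xi 3 (partOf (![0,1,2,0] : Fin 4 → Fin 4)) - xi 3 (partOf (![0,1,2,3] : Fin 4 → Fin 4)) := by
    rw [hxc]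
    simp only [xi_partOf_eq]
    funext i
    simp only [Pi.sub_apply, Pi.add_apply, Pi.smul_apply, smul_eq_mul]
    have h := congrArg (fun z : ℤ => (z : ℂ)) (key i)
    simp only [indZ] at h
    push_cast [apply_ite ((↑·) : ℤ → ℂ)] at h
    linear_combination h
  rw [heq]
  repeat
    first
      | apply Submodule.sub_mem
      | apply Submodule.add_mem
  all_goals try apply Submodule.smul_mem
  all_goals
    refine Submodule.subset_span ⟨_, cr_partOf_empty ?_, rfl⟩
    decide
end

section
/- At parameter N = 4, the vector η = (∑_{p ∈ CR(5), |p| = 3} ξ_p) − 2 (∑_{p ∈ CR(5), |p| = 2} ξ_p) lies in the span of the noncrossing-partition vectors: η ∈ span{ξ_p : p ∈ NC(5)} inside ((Fin 5 → Fin 4) → ℂ). -/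
open scoped Classical

/-! ### Auxiliary machinery: canonical codes for partitions -/

section Aux

/-- Validity of a canonical kernel code `g : Fin n → Fin n`:
`g x` is the minimum of the block of `x`, so `g x ≤ x` and `g` is idempotent. -/
def validG {n : ℕ} (g : Fin n → Fin n) : Prop := ∀ x, g x ≤ x ∧ g (g x) = g x

instance {n : ℕ} : DecidablePred (validG (n := n)) :=
  fun _ => inferInstanceAs (Decidable (∀ _, _ ∧ _))

/-- Crossing condition expressed on a code. -/
def crossG {n : ℕ} (g : Fin n → Fin n) : Prop :=
  ∃ a b c d : Fin n, a < b ∧ b < c ∧ c < d ∧ g a = g c ∧ g b = g d ∧ g a ≠ g b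

instance {n : ℕ} : DecidablePred (crossG (n := n)) :=
  fun _ => inferInstanceAs (Decidable (∃ _, _))

/-- The number of blocks of a code: its number of fixed points. -/
def nfixG {n : ℕ} (g : Fin n → Fin n) : ℕ := (Finset.univ.filter (fun x => g x = x)).card

/-- The coefficient `(-1)^{|p|} ∏_B (|B|-1)!` read off from a code. -/
def coefG {n : ℕ} (g : Fin n → Fin n) : ℤ :=
  (-1) ^ (nfixG g) *
    ∏ x ∈ Finset.univ.filter (fun x => g x = x),
      (((Finset.univ.filter (fun y => g y = x)).card - 1).factorial : ℤ)

/-- The total integral weight of a code in the universal relation. -/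
def AW (g : Fin 5 → Fin 5) : ℤ :=
  (if crossG g ∧ nfixG g = 3 then 1 else 0)
    - 2 * (if crossG g ∧ nfixG g = 2 then 1 else 0)
    - (if ¬ crossG g then coefG g else 0)

/-- Decoding a natural number (base 5) into a function `Fin 5 → Fin 5`. -/
def dec (m : ℕ) : Fin 5 → Fin 5 := fun x => ⟨m / 5 ^ (x : ℕ) % 5, Nat.mod_lt _ (by norm_num)⟩

/-- The list of the 52 encodings of valid codes (partitions of `[5]`). -/
def L : List ℕ := [0, 5, 30, 50, 55, 130, 155, 180, 300, 305, 375, 380, 405, 425, 430, 630,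
  655, 680, 755, 780, 805, 930, 1005, 1030, 1055, 1300, 1305, 1430, 1550, 1555, 1675, 1680,
  2250, 2255, 2280, 2300, 2305, 2500, 2505, 2530, 2550, 2555, 2630, 2655, 2680, 2800, 2805,
  2875, 2880, 2905, 2925, 2930]

lemma eta5 {α : Type*} (g : Fin 5 → α) : (![g 0, g 1, g 2, g 3, g 4] : Fin 5 → α) = g := by
  funext x
  fin_cases x <;> rfl

set_option maxRecDepth 10000 in
set_option maxHeartbeats 4000000 in
/-- The key universal relation, checked by `decide`. -/
lemma key_s11 : ∀ a b c d e : Fin 5, validG ![a, b, c, d, e] →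
    (∃ x y : Fin 5, x ≠ y ∧ (![a, b, c, d, e] : Fin 5 → Fin 5) x = ![a, b, c, d, e] y) →
    (L.map (fun m => AW (dec m) *
      (if ∀ x y, dec m x = dec m y →
          (![a, b, c, d, e] : Fin 5 → Fin 5) x = ![a, b, c, d, e] y then 1 else 0))).sum
      = 0 := by
  decide

set_option maxRecDepth 10000 in
set_option maxHeartbeats 4000000 in
/-- Every valid code is (the decoding of) an element of `L`. -/
lemma completeL : ∀ a b c d e : Fin 5, validG ![a, b, c, d, e] →
    ((a : ℕ) + 5 * (b : ℕ) + 25 * (c : ℕ) + 125 * (d : ℕ) + 625 * (e : ℕ)) ∈ L := by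
  decide

lemma soundL : ∀ m ∈ L, validG (dec m) := by decide

lemma nodupL : (L.map dec).Nodup := by decide

lemma dec_enc : ∀ a b c d e : Fin 5,
    dec ((a : ℕ) + 5 * (b : ℕ) + 25 * (c : ℕ) + 125 * (d : ℕ) + 625 * (e : ℕ))
      = ![a, b, c, d, e] := by
  decide

/-- The `Finset` of all valid codes. -/
def tV : Finset (Fin 5 → Fin 5) := ⟨(L.map dec : List (Fin 5 → Fin 5)), nodupL⟩

lemma mem_tV {g : Fin 5 → Fin 5} : g ∈ tV ↔ g ∈ L.map dec := by
  exact Multiset.mem_coe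

lemma sum_tV {M : Type*} [AddCommMonoid M] (F : (Fin 5 → Fin 5) → M) :
    ∑ g ∈ tV, F g = (L.map (fun m => F (dec m))).sum := by
  rw [Finset.sum]
  show (Multiset.map F (L.map dec : List (Fin 5 → Fin 5))).sum = _
  rw [Multiset.map_coe, Multiset.sum_coe, List.map_map]
  rfl

lemma validG_mem_tV {g : Fin 5 → Fin 5} (hg : validG g) : g ∈ tV := by
  rw [mem_tV]
  have h := completeL (g 0) (g 1) (g 2) (g 3) (g 4) (by rw [eta5]; exact hg)
  have h2 := dec_enc (g 0) (g 1) (g 2) (g 3) (g 4)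
  rw [eta5] at h2
  exact List.mem_map.mpr ⟨_, h, h2⟩

/-! ### The code of a partition -/

variable {n : ℕ}

/-- The canonical code of a partition: `x ↦ min` of the block of `x`. -/
noncomputable def code (p : Finpartition (Finset.univ : Finset (Fin n))) (x : Fin n) : Fin n :=
  (p.part x).min' ⟨x, p.mem_part (Finset.mem_univ x)⟩

lemma partRel_iff_part_eq (p : Finpartition (Finset.univ : Finset (Fin n))) (x y : Fin n) :
    PartRel p x y ↔ p.part x = p.part y := by
  constructor
  · rintro ⟨B, hB, hx, hy⟩
    rw [p.part_eq_of_mem hB hx, p.part_eq_of_mem hB hy]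
  · intro h
    exact ⟨p.part x, p.part_mem.mpr (Finset.mem_univ x), p.mem_part (Finset.mem_univ x),
      h ▸ p.mem_part (Finset.mem_univ y)⟩

lemma code_mem (p : Finpartition (Finset.univ : Finset (Fin n))) (x : Fin n) :
    code p x ∈ p.part x := Finset.min'_mem _ _

lemma part_code (p : Finpartition (Finset.univ : Finset (Fin n))) (x : Fin n) :
    p.part (code p x) = p.part x :=
  p.part_eq_of_mem (p.part_mem.mpr (Finset.mem_univ x)) (code_mem p x)

lemma partRel_iff_code_eq (p : Finpartition (Finset.univ : Finset (Fin n))) (x y : Fin n) :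
    PartRel p x y ↔ code p x = code p y := by
  rw [partRel_iff_part_eq]
  constructor
  · intro h; unfold code; congr 1
  · intro h
    rw [← part_code p x, h, part_code]

lemma validG_code (p : Finpartition (Finset.univ : Finset (Fin n))) : validG (code p) := by
  intro x
  constructor
  · exact Finset.min'_le _ _ (p.mem_part (Finset.mem_univ x))
  · unfold code; congr 1; exact part_code p x

lemma card_parts_eq_nfix (p : Finpartition (Finset.univ : Finset (Fin n))) :
    p.parts.card = nfixG (code p) := by
  apply Finset.card_bij (fun B hB => B.min' (p.nonempty_of_mem_parts hB))
  · intro B hB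
    simp only [Finset.mem_filter, Finset.mem_univ, true_and]
    have hmin : B.min' _ ∈ B := Finset.min'_mem _ (p.nonempty_of_mem_parts hB)
    have hpart : p.part (B.min' (p.nonempty_of_mem_parts hB)) = B := p.part_eq_of_mem hB hmin
    unfold code
    congr 1
  · intro B hB B' hB' h
    have h1 : B.min' (p.nonempty_of_mem_parts hB) ∈ B := Finset.min'_mem _ _
    have h2 : B.min' (p.nonempty_of_mem_parts hB) ∈ B' := h ▸ Finset.min'_mem _ _
    exact p.eq_of_mem_parts hB hB' h1 h2
  · intro v hv
    simp only [Finset.mem_filter, Finset.mem_univ, true_and] at hv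
    exact ⟨p.part v, p.part_mem.mpr (Finset.mem_univ v), hv⟩

lemma crNonempty_iff (p : Finpartition (Finset.univ : Finset (Fin n))) :
    (cr p).Nonempty ↔ crossG (code p) := by
  constructor
  · rintro ⟨κ, a, b, c, d, hab, hbc, hcd, -, rac, rbd, nrab⟩
    exact ⟨a, b, c, d, hab, hbc, hcd, (partRel_iff_code_eq p a c).mp rac,
      (partRel_iff_code_eq p b d).mp rbd,
      fun h => nrab ((partRel_iff_code_eq p a b).mpr h)⟩
  · rintro ⟨a, b, c, d, hab, hbc, hcd, gac, gbd, gab⟩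
    exact ⟨{a, b, c, d}, a, b, c, d, hab, hbc, hcd, rfl,
      (partRel_iff_code_eq p a c).mpr gac, (partRel_iff_code_eq p b d).mpr gbd,
      fun h => gab ((partRel_iff_code_eq p a b).mp h)⟩

lemma cr_empty_iff (p : Finpartition (Finset.univ : Finset (Fin n))) :
    cr p = ∅ ↔ ¬ crossG (code p) := by
  rw [← crNonempty_iff, Set.not_nonempty_iff_eq_empty]

/-- The partition associated to a code (more generally, to any function). -/
noncomputable def pog (g : Fin n → Fin n) : Finpartition (Finset.univ : Finset (Fin n)) :=
  Finpartition.ofSetoid ⟨fun x y => g x = g y, ⟨fun _ => rfl, Eq.symm, Eq.trans⟩⟩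

lemma mem_part_pog (g : Fin n → Fin n) (x y : Fin n) :
    y ∈ (pog g).part x ↔ g x = g y := Finpartition.mem_part_ofSetoid_iff_rel

lemma partRel_pog (g : Fin n → Fin n) (x y : Fin n) :
    PartRel (pog g) x y ↔ g x = g y := by
  constructor
  · rintro ⟨B, hB, hx, hy⟩
    have h1 : (pog g).part x = B := (pog g).part_eq_of_mem hB hx
    exact (mem_part_pog g x y).mp (h1 ▸ hy)
  · intro h
    exact ⟨(pog g).part x, (pog g).part_mem.mpr (Finset.mem_univ x),
      (pog g).mem_part (Finset.mem_univ x), (mem_part_pog g x y).mpr h⟩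

lemma code_pog {g : Fin n → Fin n} (hg : validG g) : code (pog g) = g := by
  funext x
  have hmem : g x ∈ (pog g).part x := (mem_part_pog g x (g x)).mpr (hg x).2.symm
  apply le_antisymm
  · exact Finset.min'_le _ _ hmem
  · apply Finset.le_min'
    intro y hy
    have h : g x = g y := (mem_part_pog g x y).mp hy
    calc g x = g y := h
    _ ≤ y := (hg y).1

lemma part_eq_filter (p : Finpartition (Finset.univ : Finset (Fin n))) (x : Fin n) :
    p.part x = Finset.univ.filter (fun y => PartRel p x y) := by
  ext y
  simp only [Finset.mem_filter, Finset.mem_univ, true_and]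
  constructor
  · intro hy
    exact ⟨p.part x, p.part_mem.mpr (Finset.mem_univ x), p.mem_part (Finset.mem_univ x), hy⟩
  · rintro ⟨B, hB, hx, hy⟩
    rw [p.part_eq_of_mem hB hx]; exact hy

lemma eq_of_partRel_eq {p q : Finpartition (Finset.univ : Finset (Fin n))}
    (h : ∀ x y, PartRel p x y ↔ PartRel q x y) : p = q := by
  have hpart : ∀ x, p.part x = q.part x := by
    intro x
    rw [part_eq_filter, part_eq_filter]
    apply Finset.filter_congr
    intro y _
    simp [h x y]
  ext B
  constructor
  · intro hB
    obtain ⟨x, hx⟩ := p.nonempty_of_mem_parts hB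
    rw [← p.part_eq_of_mem hB hx, hpart]
    exact q.part_mem.mpr (Finset.mem_univ x)
  · intro hB
    obtain ⟨x, hx⟩ := q.nonempty_of_mem_parts hB
    rw [← q.part_eq_of_mem hB hx, ← hpart]
    exact p.part_mem.mpr (Finset.mem_univ x)

lemma pog_code (p : Finpartition (Finset.univ : Finset (Fin n))) : pog (code p) = p := by
  apply eq_of_partRel_eq
  intro x y
  rw [partRel_pog, ← partRel_iff_code_eq]

/-- Reindexing sums over partitions by sums over valid codes. -/
lemma sum_reindex {M : Type*} [AddCommMonoid M] (F : (Fin 5 → Fin 5) → M) :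
    ∑ p : Finpartition (Finset.univ : Finset (Fin 5)), F (code p) = ∑ g ∈ tV, F g := by
  apply Finset.sum_bij' (fun p _ => code p) (fun g _ => pog g)
  · intro p _
    exact validG_mem_tV (validG_code p)
  · intro g _
    exact Finset.mem_univ _
  · intro p _
    exact pog_code p
  · intro g hg
    apply code_pog
    obtain ⟨m, hm, rfl⟩ := List.mem_map.mp (mem_tV.mp hg)
    exact soundL m hm
  · intro p _
    rfl

/-! ### The kernel code of an index tuple -/

/-- The canonical code of the kernel of `i : Fin 5 → Fin 4`. -/
noncomputable def eOf (i : Fin 5 → Fin 4) (x : Fin 5) : Fin 5 :=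
  (Finset.univ.filter (fun y => i y = i x)).min' ⟨x, by simp⟩

lemma i_eOf (i : Fin 5 → Fin 4) (x : Fin 5) : i (eOf i x) = i x := by
  have h : eOf i x ∈ Finset.univ.filter (fun y => i y = i x) :=
    Finset.min'_mem (Finset.univ.filter (fun y => i y = i x)) ⟨x, by simp⟩
  exact (Finset.mem_filter.mp h).2

lemma eOf_congr {i : Fin 5 → Fin 4} {x y : Fin 5} (h : i x = i y) : eOf i x = eOf i y := by
  unfold eOf
  congr 1
  apply Finset.filter_congr
  intro z _
  rw [h]

lemma eOf_eq_iff (i : Fin 5 → Fin 4) (x y : Fin 5) : i x = i y ↔ eOf i x = eOf i y := by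
  constructor
  · exact eOf_congr
  · intro h
    rw [← i_eOf i x, h, i_eOf i y]

lemma validG_eOf (i : Fin 5 → Fin 4) : validG (eOf i) := by
  intro x
  refine ⟨Finset.min'_le _ _ (by simp), ?_⟩
  exact eOf_congr (i_eOf i x)

lemma noninj_eOf (i : Fin 5 → Fin 4) : ∃ x y : Fin 5, x ≠ y ∧ eOf i x = eOf i y := by
  obtain ⟨x, y, hxy, h⟩ := Fintype.exists_ne_map_eq_of_card_lt i (by simp)
  exact ⟨x, y, hxy, eOf_congr h⟩

/-- The universal relation, for arbitrary valid noninjective target codes. -/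
lemma sumAW (e : Fin 5 → Fin 5) (hv : validG e) (hne : ∃ x y : Fin 5, x ≠ y ∧ e x = e y) :
    ∑ g ∈ tV, (AW g : ℂ) * (if ∀ x y, g x = g y → e x = e y then 1 else 0) = 0 := by
  have hkey := key_s11 (e 0) (e 1) (e 2) (e 3) (e 4)
    (by rw [eta5]; exact hv) (by rw [eta5]; exact hne)
  rw [eta5] at hkey
  have hZ : ∑ g ∈ tV, AW g * (if ∀ x y, g x = g y → e x = e y then (1 : ℤ) else 0) = 0 := by
    rw [sum_tV]; exact hkey
  calc ∑ g ∈ tV, (AW g : ℂ) * (if ∀ x y, g x = g y → e x = e y then 1 else 0)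
      = ((∑ g ∈ tV, AW g * (if ∀ x y, g x = g y → e x = e y then (1 : ℤ) else 0) : ℤ) : ℂ) := by
        rw [Int.cast_sum]
        apply Finset.sum_congr rfl
        intro g _
        rw [Int.cast_mul]
        congr 1
        split <;> norm_num
    _ = 0 := by rw [hZ]; norm_num

/-- The code-level summand. -/
noncomputable def DG (g : Fin 5 → Fin 5) : (Fin 5 → Fin 4) → ℂ :=
  fun i => (AW g : ℂ) * (if ∀ x y, g x = g y → i x = i y then 1 else 0)

lemma sum_DG_zero : ∑ g ∈ tV, DG g = (0 : (Fin 5 → Fin 4) → ℂ) := by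
  funext i
  rw [Finset.sum_apply]
  have hrw : ∑ g ∈ tV, DG g i
      = ∑ g ∈ tV, (AW g : ℂ) * (if ∀ x y, g x = g y → eOf i x = eOf i y then 1 else 0) := by
    apply Finset.sum_congr rfl
    intro g _
    show (AW g : ℂ) * _ = _
    congr 1
    apply if_congr _ rfl rfl
    exact forall₂_congr fun x y => imp_congr_right (fun _ => eOf_eq_iff i x y)
  rw [hrw, sumAW (eOf i) (validG_eOf i) (noninj_eOf i)]
  rfl

end Aux

/-- at parameter `N = 4`, the vector
`η = ∑_{p ∈ CR(5), |p| = 3} ξ_p − 2 ∑_{p ∈ CR(5), |p| = 2} ξ_p`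
lies in the span of the noncrossing-partition vectors. -/
theorem stmt11 :
    (∑ p : Finpartition (Finset.univ : Finset (Fin 5)),
        if (cr p).Nonempty ∧ p.parts.card = 3 then xi 4 p else 0)
      - (2 : ℂ) • (∑ p : Finpartition (Finset.univ : Finset (Fin 5)),
        if (cr p).Nonempty ∧ p.parts.card = 2 then xi 4 p else 0)
      ∈ ncSpan 4 5 := by
  classical
  set C : Finpartition (Finset.univ : Finset (Fin 5)) → ((Fin 5 → Fin 4) → ℂ) :=
    fun p => (if cr p = ∅ then (coefG (code p) : ℂ) else 0) • xi 4 p with hC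
  -- the per-partition summand equals the code-level summand
  have hstep1 : ∀ p : Finpartition (Finset.univ : Finset (Fin 5)),
      (if (cr p).Nonempty ∧ p.parts.card = 3 then xi 4 p else 0)
        - (2 : ℂ) • (if (cr p).Nonempty ∧ p.parts.card = 2 then xi 4 p else 0)
        - C p
      = DG (code p) := by
    intro p
    funext i
    have hxi : xi 4 p i = (if ∀ x y, code p x = code p y → i x = i y then (1 : ℂ) else 0) := by
      unfold xi
      apply if_congr _ rfl rfl
      exact forall₂_congr fun x y => imp_congr_left (partRel_iff_code_eq p x y)
    simp only [hC, DG, Pi.sub_apply, Pi.smul_apply, ite_apply, Pi.zero_apply, smul_eq_mul]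
    simp only [crNonempty_iff, cr_empty_iff, card_parts_eq_nfix, hxi]
    by_cases hc : crossG (code p)
    · by_cases h3 : nfixG (code p) = 3
      · by_cases h2 : nfixG (code p) = 2
        · omega
        · simp only [AW, hc, h3, h2, and_self, and_true, and_false, true_and, false_and,
            if_true, if_false, not_true_eq_false, ite_true, ite_false]
          push_cast
          ring
      · by_cases h2 : nfixG (code p) = 2
        · simp only [AW, hc, h3, h2, and_self, and_true, and_false, true_and, false_and,
            if_true, if_false, not_true_eq_false, ite_true, ite_false]
          push_cast
          ring
        · simp only [AW, hc, h3, h2, and_self, and_true, and_false, true_and, false_and,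
            if_true, if_false, not_true_eq_false, ite_true, ite_false]
          push_cast
          ring
    · simp only [AW, hc, and_true, and_false, false_and, if_true, if_false,
        not_false_eq_true, ite_true, ite_false]
      push_cast
      ring
  -- the sum of the differences vanishes
  have h0 : ∑ p : Finpartition (Finset.univ : Finset (Fin 5)),
      ((if (cr p).Nonempty ∧ p.parts.card = 3 then xi 4 p else 0)
        - (2 : ℂ) • (if (cr p).Nonempty ∧ p.parts.card = 2 then xi 4 p else 0)
        - C p)
      = (0 : (Fin 5 → Fin 4) → ℂ) := by
    rw [Finset.sum_congr rfl (fun p _ => hstep1 p), sum_reindex DG, sum_DG_zero]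
  have hAB : (∑ p : Finpartition (Finset.univ : Finset (Fin 5)),
        if (cr p).Nonempty ∧ p.parts.card = 3 then xi 4 p else 0)
      - (2 : ℂ) • (∑ p : Finpartition (Finset.univ : Finset (Fin 5)),
        if (cr p).Nonempty ∧ p.parts.card = 2 then xi 4 p else 0)
      = ∑ p : Finpartition (Finset.univ : Finset (Fin 5)), C p := by
    rw [Finset.sum_sub_distrib, Finset.sum_sub_distrib, ← Finset.smul_sum] at h0
    exact sub_eq_zero.mp h0
  rw [hAB]
  apply Submodule.sum_mem
  intro p _
  by_cases h : cr p = ∅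
  · exact Submodule.smul_mem _ _ (Submodule.subset_span ⟨p, h, rfl⟩)
  · rw [hC]
    simp only [h, if_false, zero_smul]
    exact Submodule.zero_mem _
end
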